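/- Let v₁, v₂ be vectors in Euclidean space ℝ³ with v₁ ≠ v₂, let m₁, m₂ > 0 be real masses, set q = m₁m₂/(2(m₁ + m₂)) and a = ‖v₁ - v₂‖², and let Δ be a real number with Δ ≥ -q·a. Then there exist a real number α and vectors v'₁, v'₂ ∈ ℝ³ of the form v'ᵢ = (1 + α)vᵢ + β with β = -α·(m₁v₁ + m₂v₂)/(m₁ + m₂), such that both m₁v'₁ + m₂v'₂ = m₁v₁ + m₂v₂ (momentum conservation) and (½m₁‖v'₁‖² + ½m₂‖v'₂‖²) - (½m₁‖v₁‖² + ½m₂‖v₂‖²) = Δ (the prescribed kinetic energy change). -/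

import Mathlib

theorem exists_rescaling_conserving_momentum_and_energy
    (v₁ v₂ : EuclideanSpace ℝ (Fin 3)) (hv : v₁ ≠ v₂)
    (m₁ m₂ : ℝ) (hm₁ : 0 < m₁) (hm₂ : 0 < m₂)
    (q a : ℝ)
    (hq : q = m₁ * m₂ / (2 * (m₁ + m₂)))
    (ha : a = ‖v₁ - v₂‖ ^ 2)
    (Δ : ℝ) (hΔ : Δ ≥ -(q * a)) :
    ∃ (α : ℝ) (v₁' v₂' : EuclideanSpace ℝ (Fin 3)),
      v₁' = (1 + α) • v₁ + (-α / (m₁ + m₂)) • (m₁ • v₁ + m₂ • v₂) ∧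
      v₂' = (1 + α) • v₂ + (-α / (m₁ + m₂)) • (m₁ • v₁ + m₂ • v₂) ∧
      m₁ • v₁' + m₂ • v₂' = m₁ • v₁ + m₂ • v₂ ∧
      (1/2 * m₁ * ‖v₁'‖ ^ 2 + 1/2 * m₂ * ‖v₂'‖ ^ 2)
        - (1/2 * m₁ * ‖v₁‖ ^ 2 + 1/2 * m₂ * ‖v₂‖ ^ 2) = Δ := by
  have hM : (0:ℝ) < m₁ + m₂ := by linarith
  have hMne : (m₁ + m₂) ≠ 0 := ne_of_gt hM
  have hwne : v₁ - v₂ ≠ 0 := sub_ne_zero.mpr hv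
  have han : (0:ℝ) < a := by
    rw [ha]; exact pow_pos (norm_pos_iff.mpr hwne) 2
  have hqpos : (0:ℝ) < q := by rw [hq]; positivity
  have hqa : (0:ℝ) < q * a := mul_pos hqpos han
  have h1 : (0:ℝ) ≤ 1 + Δ / (q * a) := by
    rw [show (1:ℝ) + Δ / (q * a) = (q * a + Δ) / (q * a) by field_simp]
    apply div_nonneg _ hqa.le
    linarith
  set α : ℝ := Real.sqrt (1 + Δ / (q * a)) - 1 with hα
  have hα2 : (1 + α) ^ 2 = 1 + Δ / (q * a) := by
    have h : 1 + α = Real.sqrt (1 + Δ / (q * a)) := by rw [hα]; ring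
    rw [h, Real.sq_sqrt h1]
  have hΔeq : Δ = q * a * ((1 + α) ^ 2 - 1) := by
    rw [hα2]; field_simp; ring
  refine ⟨α, _, _, rfl, rfl, ?_, ?_⟩
  · match_scalars <;> field_simp <;> ring
  · set w : EuclideanSpace ℝ (Fin 3) := v₁ - v₂ with hw
    have h1' : (1 + α) • v₁ + (-α / (m₁ + m₂)) • (m₁ • v₁ + m₂ • v₂)
        = v₁ + ((α / (m₁ + m₂)) * m₂) • w := by
      rw [hw]; match_scalars <;> field_simp <;> ring
    have h2' : (1 + α) • v₂ + (-α / (m₁ + m₂)) • (m₁ • v₁ + m₂ • v₂)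
        = v₂ + (-(α / (m₁ + m₂)) * m₁) • w := by
      rw [hw]; match_scalars <;> field_simp <;> ring
    rw [h1', h2']
    have key : ∀ (x : EuclideanSpace ℝ (Fin 3)) (c : ℝ),
        ‖x + c • w‖ ^ 2 = ‖x‖ ^ 2 + 2 * c * inner ℝ x w + c ^ 2 * ‖w‖ ^ 2 := by
      intro x c
      rw [norm_add_sq_real, real_inner_smul_right, norm_smul]
      simp [Real.norm_eq_abs, mul_pow, sq_abs]
      ring
    rw [key, key]
    have hiw : (inner ℝ v₁ w : ℝ) - inner ℝ v₂ w = ‖w‖ ^ 2 := by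
      rw [← inner_sub_left, ← hw, real_inner_self_eq_norm_sq]
    have hi1 : (inner ℝ v₁ w : ℝ) = inner ℝ v₂ w + ‖w‖ ^ 2 := by linarith
    rw [hi1, hΔeq, ha, hq]
    field_simp
    ring
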